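/- arXiv:1810.06101 — 3 statements merged into one kernel-verified Lean document; each statement's English description precedes it below -/
import Mathlib

section
/- Let Δ ∈ L²(Ω×[0,T], P⊗μ) be jointly measurable and set r_t = ∫₀ᵗ Δ_u du. Then E[∫₀ᵀ (a·Δ_t² + φ·r_t² + 2Ψ·Δ_t·r_t) dt] = E[∫₀ᵀ (a·Δ_t² + φ·r_t²) dt] + Ψ·E[r_T²], and this quantity is strictly positive whenever the set {(x,t) : Δ_t(x) ≠ 0} has positive P⊗μ-measure. -/
open MeasureTheory




lemma aux_sq_integral_abs_le {α : Type*} [MeasurableSpace α] (ν : Measure α) [IsFiniteMeasure ν]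
    (g : α → ℝ) (hg : AEStronglyMeasurable g ν) (hg2 : Integrable (fun x => g x ^ 2) ν) :
    (∫ x, |g x| ∂ν) ^ 2 ≤ (ν Set.univ).toReal * ∫ x, g x ^ 2 ∂ν := by
  set m := (ν Set.univ).toReal with hm
  have hm0 : 0 ≤ m := ENNReal.toReal_nonneg
  have hg1 : Integrable (fun x => |g x|) ν := by
    refine Integrable.mono' ((integrable_const (1:ℝ)).add hg2) hg.norm ?_
    filter_upwards with x
    have h := sq_abs (g x)
    have : |g x| ≤ 1 + g x ^ 2 := by nlinarith [abs_nonneg (g x)]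
    simpa [abs_abs] using this
  rcases eq_or_lt_of_le hm0 with h0 | hmpos
  · have huniv : ν Set.univ = 0 := by
      rcases (ENNReal.toReal_eq_zero_iff _).mp h0.symm with h | h
      · exact h
      · exact absurd h (measure_ne_top ν _)
    have hν : ν = 0 := Measure.measure_univ_eq_zero.mp huniv
    simp [hν]
  · set I := ∫ x, |g x| ∂ν with hI
    set c := I / m with hc
    have hcm : c * m = I := by rw [hc]; exact div_mul_cancel₀ I hmpos.ne'
    have hexp : 0 ≤ ∫ x, (|g x| - c) ^ 2 ∂ν := integral_nonneg fun x => sq_nonneg _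
    have hcalc : ∫ x, (|g x| - c) ^ 2 ∂ν
        = ∫ x, g x ^ 2 ∂ν - 2 * c * I + c ^ 2 * m := by
      have h1 : (fun x => (|g x| - c) ^ 2)
          = fun x => (g x ^ 2 - (2 * c) * |g x|) + c ^ 2 := by
        funext x
        have := sq_abs (g x)
        nlinarith [sq_abs (g x)]
      have hint1 : Integrable (fun x => g x ^ 2 - 2 * c * |g x|) ν :=
        hg2.sub (hg1.const_mul (2 * c))
      rw [h1, integral_add hint1 (integrable_const _),
        integral_sub hg2 (hg1.const_mul (2 * c)), integral_const_mul, integral_const]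
      simp only [smul_eq_mul, measureReal_def, ← hm, ← hI]
      ring
    nlinarith [hexp, hcalc, hcm, hmpos]


lemma aux_key_identity (T : ℝ) (hT : 0 ≤ T) (g : ℝ → ℝ) (hg : Integrable g volume) :
    (∫ u in (0:ℝ)..T, g u) ^ 2 = 2 * ∫ t in (0:ℝ)..T, g t * ∫ u in (0:ℝ)..t, g u := by
  set ν := volume.restrict (Set.Ioc (0:ℝ) T) with hν
  have hgi : Integrable g ν := hg.restrict
  set G : ℝ × ℝ → ℝ := fun p => g p.1 * g p.2 with hG
  have hGi : Integrable G (ν.prod ν) := hgi.mul_prod hgi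
  have hSm : MeasurableSet {p : ℝ × ℝ | p.2 ≤ p.1} := measurableSet_le measurable_snd measurable_fst
  have hS'm : MeasurableSet {p : ℝ × ℝ | p.1 < p.2} := measurableSet_lt measurable_fst measurable_snd
  have hS''m : MeasurableSet {p : ℝ × ℝ | p.2 < p.1} := measurableSet_lt measurable_snd measurable_fst
  have hdiag : (ν.prod ν) {p : ℝ × ℝ | p.1 = p.2} = 0 := by
    have hDm : MeasurableSet {p : ℝ × ℝ | p.1 = p.2} :=
      measurableSet_eq_fun measurable_fst measurable_snd
    rw [Measure.prod_apply hDm]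
    have hfib : ∀ t : ℝ, ν (Prod.mk t ⁻¹' {p : ℝ × ℝ | p.1 = p.2}) = 0 := by
      intro t
      have hpre : Prod.mk t ⁻¹' {p : ℝ × ℝ | p.1 = p.2} = {t} := by
        ext s; simp [eq_comm]
      rw [hpre, hν, Measure.restrict_apply (measurableSet_singleton t)]
      exact measure_mono_null Set.inter_subset_left Real.volume_singleton
    simp [hfib]
  have hne : ∀ᵐ p ∂(ν.prod ν), p.1 ≠ p.2 := by
    rw [ae_iff]
    simpa only [ne_eq, Classical.not_not] using hdiag
  -- swap symmetry
  have hswap : ∫ p, Set.indicator {p : ℝ × ℝ | p.1 < p.2} G p ∂(ν.prod ν)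
      = ∫ p, Set.indicator {p : ℝ × ℝ | p.2 < p.1} G p ∂(ν.prod ν) := by
    rw [← MeasureTheory.integral_prod_swap (fun p => Set.indicator {p : ℝ × ℝ | p.1 < p.2} G p)]
    congr 1
    funext p
    by_cases h : p.2 < p.1 <;>
      simp [Set.indicator, hG, h, Prod.swap, mul_comm]
  have hleft : ∫ p, Set.indicator {p : ℝ × ℝ | p.2 ≤ p.1} G p ∂(ν.prod ν)
      = ∫ p, Set.indicator {p : ℝ × ℝ | p.2 < p.1} G p ∂(ν.prod ν) := by
    refine integral_congr_ae ?_
    filter_upwards [hne] with p hp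
    by_cases h : p.2 ≤ p.1
    · have h' : p.2 < p.1 := h.lt_of_ne fun e => hp e.symm
      simp [Set.indicator, h, h']
    · have h' : ¬ p.2 < p.1 := fun h'' => h h''.le
      simp [Set.indicator, h, h']
  have hsum : ∫ p, G p ∂(ν.prod ν)
      = (∫ p, Set.indicator {p : ℝ × ℝ | p.2 ≤ p.1} G p ∂(ν.prod ν))
        + ∫ p, Set.indicator {p : ℝ × ℝ | p.1 < p.2} G p ∂(ν.prod ν) := by
    rw [← integral_add (hGi.indicator hSm) (hGi.indicator hS'm)]
    refine integral_congr_ae (Filter.Eventually.of_forall fun p => ?_)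
    by_cases h : p.2 ≤ p.1
    · have h' : ¬ p.1 < p.2 := not_lt.mpr h
      simp [Set.indicator, h, h']
    · have h' : p.1 < p.2 := not_le.mp h
      simp [Set.indicator, h, h']
  have hdouble : ∫ p, G p ∂(ν.prod ν)
      = 2 * ∫ p, Set.indicator {p : ℝ × ℝ | p.2 ≤ p.1} G p ∂(ν.prod ν) := by
    rw [hsum, hswap, ← hleft]; ring
  -- Fubini for the triangle
  have hFub : ∫ p, Set.indicator {p : ℝ × ℝ | p.2 ≤ p.1} G p ∂(ν.prod ν)
      = ∫ t, (g t * ∫ u in (0:ℝ)..t, g u) ∂ν := by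
    have hfub0 := MeasureTheory.integral_prod (μ := ν) (ν := ν)
      (Set.indicator {p : ℝ × ℝ | p.2 ≤ p.1} G) (hGi.indicator hSm)
    rw [hfub0]
    refine integral_congr_ae ?_
    filter_upwards [ae_restrict_mem measurableSet_Ioc] with t ht
    have h1 : (fun s => Set.indicator {p : ℝ × ℝ | p.2 ≤ p.1} G (t, s))
        = Set.indicator (Set.Iic t) (fun s => g t * g s) := by
      funext s
      by_cases h : s ≤ t <;> simp [Set.indicator, hG, h]
    rw [h1, integral_indicator measurableSet_Iic]
    have h2 : ν.restrict (Set.Iic t) = volume.restrict (Set.Ioc (0:ℝ) t) := by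
      rw [hν, Measure.restrict_restrict measurableSet_Iic]
      congr 1
      ext u
      simp only [Set.mem_inter_iff, Set.mem_Iic, Set.mem_Ioc]
      exact ⟨fun ⟨h1', h2', _⟩ => ⟨h2', h1'⟩, fun ⟨h1', h2'⟩ => ⟨h2', h1', h2'.trans ht.2⟩⟩
    rw [h2, MeasureTheory.integral_const_mul, ← intervalIntegral.integral_of_le ht.1.le]
  have hint : ∫ u in (0:ℝ)..T, g u = ∫ u, g u ∂ν := intervalIntegral.integral_of_le hT
  have hGsq : ∫ p, G p ∂(ν.prod ν) = (∫ u, g u ∂ν) ^ 2 := by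
    rw [hG]
    rw [MeasureTheory.integral_prod_mul g g]
    ring
  rw [hint, intervalIntegral.integral_of_le hT, ← hGsq, hdouble, hFub]


lemma aux_jointly_measurable {Ω : Type*} [MeasurableSpace Ω] (rD : Ω → ℝ → ℝ)
    (hc : ∀ x, Continuous (rD x)) (hm : ∀ t, StronglyMeasurable fun x => rD x t) :
    StronglyMeasurable (fun p : Ω × ℝ => rD p.1 p.2) := by
  have h : StronglyMeasurable (Function.uncurry fun t x => rD x t) :=
    stronglyMeasurable_uncurry_of_continuous_of_stronglyMeasurable (fun x => hc x) hm
  exact h.comp_measurable measurable_swap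

/-- core quadratic-form positivity in the proof of Lemma 3.1:
for `r_t = ∫₀ᵗ Δ_u du`,
`E[∫₀ᵀ (a·Δ² + φ·r² + 2Ψ·Δ·r) dt] = E[∫₀ᵀ (a·Δ² + φ·r²) dt] + Ψ·E[r_T²]`,
and this quantity is strictly positive whenever `{Δ ≠ 0}` has positive `P⊗μ`-measure. -/
theorem quadratic_form_positivity
    {Ω : Type*} [MeasurableSpace Ω]
    (P : Measure Ω) [IsProbabilityMeasure P]
    (T : ℝ) (hT : 0 < T) (a Ψ φ : ℝ) (ha : 0 < a) (hΨ : 0 ≤ Ψ) (hφ : 0 ≤ φ)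
    (μ : Measure ℝ) (hμ : μ = volume.restrict (Set.Icc (0:ℝ) T))
    (Δ : Ω × ℝ → ℝ) (hΔ : MemLp Δ 2 (P.prod μ))
    (r : Ω → ℝ → ℝ) (hr : ∀ x t, r x t = ∫ u in (0:ℝ)..t, Δ (x, u)) :
    (∫ x, (∫ t in (0:ℝ)..T,
        (a * (Δ (x, t)) ^ 2 + φ * (r x t) ^ 2 + 2 * Ψ * Δ (x, t) * r x t)) ∂P)
      = (∫ x, (∫ t in (0:ℝ)..T, (a * (Δ (x, t)) ^ 2 + φ * (r x t) ^ 2)) ∂P)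
        + Ψ * (∫ x, (r x T) ^ 2 ∂P)
    ∧ (0 < (P.prod μ) {p | Δ p ≠ 0} →
        0 < ∫ x, (∫ t in (0:ℝ)..T,
          (a * (Δ (x, t)) ^ 2 + φ * (r x t) ^ 2 + 2 * Ψ * Δ (x, t) * r x t)) ∂P) := by
  subst hμ
  have hIoc : volume.restrict (Set.Icc (0:ℝ) T) = volume.restrict (Set.Ioc (0:ℝ) T) :=
    (Measure.restrict_congr_set Ioc_ae_eq_Icc).symm
  rw [hIoc] at hΔ ⊢
  set ν := volume.restrict (Set.Ioc (0:ℝ) T) with hνdef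
  have hνuniv : (ν Set.univ).toReal ≤ T := by
    rw [hνdef, Measure.restrict_apply_univ, Real.volume_Ioc]
    rw [ENNReal.toReal_ofReal (by linarith)]
    linarith
  haveI hfinν : IsFiniteMeasure ν := by
    constructor
    rw [hνdef, Measure.restrict_apply_univ, Real.volume_Ioc]
    exact ENNReal.ofReal_lt_top
  have hΔint : Integrable Δ (P.prod ν) := hΔ.integrable one_le_two
  have hΔsq : Integrable (fun p => Δ p ^ 2) (P.prod ν) := hΔ.integrable_sq
  have hΔm := hΔ.aestronglyMeasurable
  set Δ₀ : Ω × ℝ → ℝ := hΔm.mk Δ with hΔ₀def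
  have hΔ₀sm : StronglyMeasurable Δ₀ := hΔm.stronglyMeasurable_mk
  have hae : Δ =ᵐ[P.prod ν] Δ₀ := hΔm.ae_eq_mk
  set S : Set Ω := {x | Integrable (fun u => Δ₀ (x, u)) ν} with hSdef
  have hSmeas : MeasurableSet S :=
    measurableSet_integrable (f := fun x u => Δ₀ (x, u)) hΔ₀sm
  set D : Ω × ℝ → ℝ := (S ×ˢ Set.Ioc (0:ℝ) T).indicator Δ₀ with hDdef
  have hDsm : StronglyMeasurable D := hΔ₀sm.indicator (hSmeas.prod measurableSet_Ioc)
  have hsnd : ∀ᵐ p ∂(P.prod ν), p.2 ∈ Set.Ioc (0:ℝ) T := by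
    apply Measure.quasiMeasurePreserving_snd.ae
    rw [hνdef]
    exact ae_restrict_mem measurableSet_Ioc
  have hfst : ∀ᵐ p ∂(P.prod ν), p.1 ∈ S := by
    apply Measure.quasiMeasurePreserving_fst.ae
    exact (hΔint.congr hae).prod_right_ae
  have hDae : D =ᵐ[P.prod ν] Δ := by
    filter_upwards [hsnd, hfst, hae] with p h2 h1 h3
    rw [hDdef, Set.indicator_of_mem (Set.mk_mem_prod h1 h2)]
    exact h3.symm
  have hDint : ∀ x, Integrable (fun u => D (x, u)) volume := by
    intro x
    by_cases hx : x ∈ S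
    · have hfun : (fun u => D (x, u))
          = Set.indicator (Set.Ioc (0:ℝ) T) (fun u => Δ₀ (x, u)) := by
        funext u
        by_cases hu : u ∈ Set.Ioc (0:ℝ) T
        · rw [hDdef, Set.indicator_of_mem (Set.mk_mem_prod hx hu), Set.indicator_of_mem hu]
        · rw [hDdef, Set.indicator_of_notMem (fun hm => hu hm.2), Set.indicator_of_notMem hu]
      rw [hfun]
      exact IntegrableOn.integrable_indicator hx measurableSet_Ioc
    · have hfun : (fun u => D (x, u)) = fun _ => (0:ℝ) := by
        funext u; rw [hDdef, Set.indicator_of_notMem (fun hm => hx hm.1)]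
      rw [hfun]; exact integrable_zero _ _ _
  set rD : Ω → ℝ → ℝ := fun x t => ∫ u in (0:ℝ)..t, D (x, u) with hrDdef
  have hrDcont : ∀ x, Continuous (rD x) := fun x => (hDint x).continuous_primitive 0
  have hrDmx : ∀ t, StronglyMeasurable fun x => rD x t := by
    intro t
    have h1 : StronglyMeasurable fun x => ∫ u, D (x, u) ∂(volume.restrict (Set.Ioc (0:ℝ) t)) :=
      hDsm.integral_prod_right' (ν := volume.restrict (Set.Ioc (0:ℝ) t))
    have h2 : StronglyMeasurable fun x => ∫ u, D (x, u) ∂(volume.restrict (Set.Ioc t (0:ℝ))) :=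
      hDsm.integral_prod_right' (ν := volume.restrict (Set.Ioc t (0:ℝ)))
    have heq : (fun x => rD x t)
        = fun x => (∫ u in Set.Ioc (0:ℝ) t, D (x, u)) - ∫ u in Set.Ioc t (0:ℝ), D (x, u) := rfl
    rw [heq]
    exact h1.sub h2
  have hrDjm : StronglyMeasurable (fun p : Ω × ℝ => rD p.1 p.2) := by
    exact aux_jointly_measurable rD hrDcont hrDmx
  have hkey : ∀ x, (rD x T) ^ 2 = 2 * ∫ t in (0:ℝ)..T, D (x, t) * rD x t := fun x =>
    aux_key_identity T hT.le (fun u => D (x, u)) (hDint x)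
  -- transfer r to rD
  have hsect : ∀ᵐ x ∂P, (fun u => Δ (x, u)) =ᵐ[ν] (fun u => D (x, u)) :=
    Measure.ae_ae_of_ae_prod hDae.symm
  have hrr : ∀ᵐ x ∂P, ∀ t ∈ Set.Icc (0:ℝ) T, r x t = rD x t := by
    filter_upwards [hsect] with x hx
    intro t ht
    have hsub : ∀ᵐ u ∂(volume.restrict (Set.Ioc (0:ℝ) t)), Δ (x, u) = D (x, u) := by
      refine ae_restrict_of_ae_restrict_of_subset (Set.Ioc_subset_Ioc_right ht.2) ?_
      exact hx
    rw [hr]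
    show (∫ u in (0:ℝ)..t, Δ (x, u)) = ∫ u in (0:ℝ)..t, D (x, u)
    rw [intervalIntegral.integral_of_le ht.1, intervalIntegral.integral_of_le ht.1]
    exact integral_congr_ae hsub
  have hDsq : Integrable (fun p => D p ^ 2) (P.prod ν) := by
    refine hΔsq.congr ?_
    filter_upwards [hDae] with p hp
    rw [hp]
  have hDsqsect : ∀ᵐ x ∂P, Integrable (fun t => D (x, t) ^ 2) ν := hDsq.prod_right_ae
  set H1 : Ω → ℝ := fun x => ∫ t, D (x, t) ^ 2 ∂ν with hH1def
  have hH1int : Integrable H1 P := hDsq.integral_prod_left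
  have hH1nonneg : ∀ x, 0 ≤ H1 x := fun x => integral_nonneg fun t => sq_nonneg _
  have hrDbound : ∀ x, ∀ t ∈ Set.Icc (0:ℝ) T, |rD x t| ≤ ∫ u, |D (x, u)| ∂ν := by
    intro x t ht
    have h1 : |rD x t| ≤ ∫ u in (0:ℝ)..t, |D (x, u)| :=
      intervalIntegral.abs_integral_le_integral_abs ht.1
    refine h1.trans ?_
    rw [intervalIntegral.integral_of_le ht.1]
    refine setIntegral_mono_set ((hDint x).abs.integrableOn)
      (Filter.Eventually.of_forall fun u => abs_nonneg _) ?_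
    exact Filter.Eventually.of_forall (Set.Ioc_subset_Ioc_right ht.2)
  have hCS : ∀ᵐ x ∂P, (∫ u, |D (x, u)| ∂ν) ^ 2 ≤ T * H1 x := by
    filter_upwards [hDsqsect] with x hx2
    have h := aux_sq_integral_abs_le ν (fun u => D (x, u))
      ((hDint x).restrict (s := Set.Ioc 0 T)).aestronglyMeasurable hx2
    have h2 : (ν Set.univ).toReal * H1 x ≤ T * H1 x :=
      mul_le_mul_of_nonneg_right hνuniv (hH1nonneg x)
    exact h.trans h2
  have hrDsqb : ∀ᵐ x ∂P, ∀ t ∈ Set.Icc (0:ℝ) T, rD x t ^ 2 ≤ T * H1 x := by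
    filter_upwards [hCS] with x hx t ht
    have h1 := hrDbound x t ht
    have h2 : |rD x t| ^ 2 ≤ (∫ u, |D (x, u)| ∂ν) ^ 2 :=
      pow_le_pow_left₀ (abs_nonneg _) h1 2
    rw [sq_abs] at h2
    linarith
  set H2 : Ω → ℝ := fun x => ∫ t, rD x t ^ 2 ∂ν with hH2def
  have hH2m : AEStronglyMeasurable H2 P := by
    have h : StronglyMeasurable (fun p : Ω × ℝ => rD p.1 p.2 ^ 2) := by
      have := hrDjm.mul hrDjm
      simpa [pow_two, Pi.mul_def] using this
    exact (h.integral_prod_right' (ν := ν)).aestronglyMeasurable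
  have hH2nonneg : ∀ x, 0 ≤ H2 x := fun x => integral_nonneg fun t => sq_nonneg _
  have hrDsqint : ∀ x, Integrable (fun t => rD x t ^ 2) ν :=
    fun x => ((hrDcont x).pow 2).integrableOn_Ioc
  have hH2le : ∀ᵐ x ∂P, H2 x ≤ T ^ 2 * H1 x := by
    filter_upwards [hrDsqb] with x hx
    have hmono : H2 x ≤ ∫ _t, T * H1 x ∂ν := by
      refine integral_mono_ae (hrDsqint x) (integrable_const _) ?_
      filter_upwards [ae_restrict_mem measurableSet_Ioc] with t ht
      exact hx t ⟨ht.1.le, ht.2⟩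
    rw [integral_const, smul_eq_mul, measureReal_def] at hmono
    have h3 : (ν Set.univ).toReal * (T * H1 x) ≤ T * (T * H1 x) :=
      mul_le_mul_of_nonneg_right hνuniv (mul_nonneg hT.le (hH1nonneg x))
    nlinarith
  have hH2int : Integrable H2 P := by
    refine Integrable.mono' (hH1int.const_mul (T ^ 2)) hH2m ?_
    filter_upwards [hH2le] with x h1
    rw [Real.norm_eq_abs, abs_of_nonneg (hH2nonneg x)]
    exact h1
  set F2 : Ω → ℝ := fun x => rD x T ^ 2 with hF2def
  have hF2m : AEStronglyMeasurable F2 P := by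
    have h : StronglyMeasurable fun x => rD x T * rD x T := (hrDmx T).mul (hrDmx T)
    have he : F2 = fun x => rD x T * rD x T := by
      funext x
      show rD x T ^ 2 = rD x T * rD x T
      ring
    rw [he]
    exact h.aestronglyMeasurable
  have hF2le : ∀ᵐ x ∂P, F2 x ≤ T * H1 x := by
    filter_upwards [hrDsqb] with x hx
    exact hx T ⟨hT.le, le_refl T⟩
  have hF2int : Integrable F2 P := by
    refine Integrable.mono' (hH1int.const_mul T) hF2m ?_
    filter_upwards [hF2le] with x h1
    rw [Real.norm_eq_abs, abs_of_nonneg (sq_nonneg _)]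
    exact h1
  set F1 : Ω → ℝ := fun x => ∫ t in (0:ℝ)..T, (a * D (x, t) ^ 2 + φ * rD x t ^ 2) with hF1def
  have hF1eq : ∀ᵐ x ∂P, F1 x = a * H1 x + φ * H2 x := by
    filter_upwards [hDsqsect] with x hx2
    show (∫ t in (0:ℝ)..T, (a * D (x, t) ^ 2 + φ * rD x t ^ 2)) = a * H1 x + φ * H2 x
    rw [intervalIntegral.integral_of_le hT.le]
    have heqν : ∫ t in Set.Ioc (0:ℝ) T, (a * D (x, t) ^ 2 + φ * rD x t ^ 2)
        = ∫ t, (a * D (x, t) ^ 2 + φ * rD x t ^ 2) ∂ν := rfl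
    rw [heqν, integral_add (hx2.const_mul a) ((hrDsqint x).const_mul φ),
      integral_const_mul, integral_const_mul]
  have hF1int : Integrable F1 P := by
    refine ((hH1int.const_mul a).add (hH2int.const_mul φ)).congr ?_
    filter_upwards [hF1eq] with x h1
    simp only [Pi.add_apply, h1]
  -- inner splitting
  have hinner : ∀ᵐ x ∂P,
      (∫ t in (0:ℝ)..T, (a * D (x, t) ^ 2 + φ * rD x t ^ 2 + 2 * Ψ * D (x, t) * rD x t))
        = F1 x + Ψ * F2 x := by
    filter_upwards [hDsqsect] with x hx2
    have hiA : IntervalIntegrable (fun t => a * D (x, t) ^ 2 + φ * rD x t ^ 2) volume 0 T := by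
      rw [intervalIntegrable_iff_integrableOn_Ioc_of_le hT.le]
      exact (hx2.const_mul a).add ((hrDsqint x).const_mul φ)
    have hiC : IntervalIntegrable (fun t => 2 * Ψ * D (x, t) * rD x t) volume 0 T := by
      rw [intervalIntegrable_iff_integrableOn_Ioc_of_le hT.le]
      obtain ⟨C, hC⟩ := (isCompact_Icc (a := (0:ℝ)) (b := T)).exists_bound_of_continuousOn
        ((continuous_const.mul (hrDcont x)).continuousOn (s := Set.Icc (0:ℝ) T))
      have hprod : Integrable (fun t => (2 * Ψ * rD x t) * D (x, t)) ν := by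
        refine Integrable.bdd_mul (c := C) ((hDint x).restrict (s := Set.Ioc 0 T))
          ((continuous_const.mul (hrDcont x)).aestronglyMeasurable) ?_
        filter_upwards [ae_restrict_mem measurableSet_Ioc] with t ht
        exact hC t ⟨ht.1.le, ht.2⟩
      refine hprod.congr ?_
      filter_upwards with t
      ring
    have hsplit := intervalIntegral.integral_add hiA hiC
    rw [hsplit]
    congr 1
    have hconst : (fun t => 2 * Ψ * D (x, t) * rD x t)
        = fun t => Ψ * (2 * (D (x, t) * rD x t)) := by funext t; ring
    rw [hconst, intervalIntegral.integral_const_mul, intervalIntegral.integral_const_mul,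
      ← hkey x]
  -- transfer to the original integrands
  have hLHSae : (fun x => ∫ t in (0:ℝ)..T,
      (a * Δ (x, t) ^ 2 + φ * r x t ^ 2 + 2 * Ψ * Δ (x, t) * r x t))
        =ᵐ[P] fun x => F1 x + Ψ * F2 x := by
    filter_upwards [hsect, hrr, hinner] with x hx hxr hxi
    rw [← hxi, intervalIntegral.integral_of_le hT.le, intervalIntegral.integral_of_le hT.le]
    refine integral_congr_ae ?_
    filter_upwards [hx, ae_restrict_mem measurableSet_Ioc] with t htΔ htmem
    rw [htΔ, hxr t ⟨htmem.1.le, htmem.2⟩]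
  have hRHS1ae : (fun x => ∫ t in (0:ℝ)..T, (a * Δ (x, t) ^ 2 + φ * r x t ^ 2)) =ᵐ[P] F1 := by
    filter_upwards [hsect, hrr] with x hx hxr
    show (∫ t in (0:ℝ)..T, (a * Δ (x, t) ^ 2 + φ * r x t ^ 2))
        = ∫ t in (0:ℝ)..T, (a * D (x, t) ^ 2 + φ * rD x t ^ 2)
    rw [intervalIntegral.integral_of_le hT.le, intervalIntegral.integral_of_le hT.le]
    refine integral_congr_ae ?_
    filter_upwards [hx, ae_restrict_mem measurableSet_Ioc] with t htΔ htmem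
    rw [htΔ, hxr t ⟨htmem.1.le, htmem.2⟩]
  have hRHS2ae : (fun x => r x T ^ 2) =ᵐ[P] F2 := by
    filter_upwards [hrr] with x hxr
    show r x T ^ 2 = rD x T ^ 2
    rw [hxr T ⟨hT.le, le_refl T⟩]
  have hmain : (∫ x, (∫ t in (0:ℝ)..T,
      (a * Δ (x, t) ^ 2 + φ * r x t ^ 2 + 2 * Ψ * Δ (x, t) * r x t)) ∂P)
        = (∫ x, F1 x ∂P) + Ψ * ∫ x, F2 x ∂P := by
    rw [integral_congr_ae hLHSae, integral_add hF1int (hF2int.const_mul Ψ),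
      integral_const_mul]
  constructor
  · rw [hmain, integral_congr_ae hRHS1ae, integral_congr_ae hRHS2ae]
  · intro hpos
    rw [hmain]
    have h2 : 0 ≤ Ψ * ∫ x, F2 x ∂P :=
      mul_nonneg hΨ (integral_nonneg fun x => sq_nonneg _)
    have hΔsqpos : 0 < ∫ p, Δ p ^ 2 ∂(P.prod ν) := by
      refine (integral_pos_iff_support_of_nonneg (fun p => sq_nonneg _) hΔsq).2 ?_
      have hsupp : Function.support (fun p => Δ p ^ 2) = {p | Δ p ≠ 0} := by
        ext p; simp [Function.support, pow_eq_zero_iff]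
      rw [hsupp]
      exact hpos
    have hDsqeq : ∫ p, D p ^ 2 ∂(P.prod ν) = ∫ p, Δ p ^ 2 ∂(P.prod ν) := by
      refine integral_congr_ae ?_
      filter_upwards [hDae] with p hp
      rw [hp]
    have hprodH1 : ∫ p, D p ^ 2 ∂(P.prod ν) = ∫ x, H1 x ∂P :=
      integral_prod _ hDsq
    have hF1ge : a * ∫ x, H1 x ∂P ≤ ∫ x, F1 x ∂P := by
      rw [← integral_const_mul]
      refine integral_mono_ae (hH1int.const_mul a) hF1int ?_
      filter_upwards [hF1eq] with x h1
      rw [h1]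
      nlinarith [hH2nonneg x]
    have hH1pos : 0 < ∫ x, H1 x ∂P := by rw [← hprodH1, hDsqeq]; exact hΔsqpos
    nlinarith
end

section
/- For every ν, ω ∈ L²(Ω×[0,T], P⊗μ), the Gâteaux derivative of H at ν in the direction ω exists; that is, the limit as ε→0 of (H(ν+εω) − H(ν))/ε exists and equals E[∫₀ᵀ ω_t·( −2a·ν_t − 2Ψ·q^ν_T + ∫_t^T (α_u − 2φ·q^ν_u) du ) dt]. -/
open MeasureTheory

noncomputable section

variable {Ω : Type*} [MeasurableSpace Ω]

/-- The inventory process `q^ν_t = Q₀ + ∫₀ᵗ ν_u du`. -/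
def inventory (Q₀ : Ω → ℝ) (ν : Ω × ℝ → ℝ) (x : Ω) (t : ℝ) : ℝ :=
  Q₀ x + ∫ u in (0:ℝ)..t, ν (x, u)

/-- The limiting mean-field objective functional
`H(ν) = E[∫₀ᵀ ( q^ν_t·α_t − a·ν_t² − 2Ψ·ν_t·q^ν_t − φ·(q^ν_t)² ) dt]`. -/
def objH (P : Measure Ω) (T a Ψ φ : ℝ) (Q₀ : Ω → ℝ) (α ν : Ω × ℝ → ℝ) : ℝ :=
  ∫ x, (∫ t in (0:ℝ)..T,
    (inventory Q₀ ν x t * α (x, t) - a * (ν (x, t)) ^ 2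
      - 2 * Ψ * ν (x, t) * inventory Q₀ ν x t
      - φ * (inventory Q₀ ν x t) ^ 2)) ∂P


namespace GxAux

open Set intervalIntegral
open scoped ENNReal





variable {γ : Type*} [MeasurableSpace γ]

lemma integrable_mul_of_memL2 {m : Measure γ} {f g : γ → ℝ}
    (hf : MemLp f 2 m) (hg : MemLp g 2 m) :
    Integrable (fun x => f x * g x) m := by
  refine Integrable.mono' ((hf.integrable_sq.add hg.integrable_sq).div_const 2)
    (hf.1.mul hg.1) (Filter.Eventually.of_forall fun x => ?_)
  simp only [Real.norm_eq_abs, abs_mul, Pi.div_apply, Pi.add_apply]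
  nlinarith [sq_nonneg (|f x| - |g x|), sq_abs (f x), sq_abs (g x),
    abs_nonneg (f x), abs_nonneg (g x)]

lemma triangle_swap {T : ℝ} (hT : 0 ≤ T) {f g : ℝ → ℝ}
    (hf : IntegrableOn f (Ioc 0 T)) (hg : IntegrableOn g (Ioc 0 T)) :
    ∫ t in (0:ℝ)..T, (∫ s in (0:ℝ)..t, f s) * g t
      = ∫ s in (0:ℝ)..T, f s * ∫ t in s..T, g t := by
  set m : Measure ℝ := volume.restrict (Ioc 0 T) with hm
  set K : ℝ × ℝ → ℝ := fun z => ({p : ℝ × ℝ | p.1 ≤ p.2}).indicator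
      (fun p => f p.1 * g p.2) z with hK
  have hKint : Integrable K (m.prod m) :=
    (Integrable.mul_prod hf hg).indicator (measurableSet_le measurable_fst measurable_snd)
  have hswap : ∫ t, (∫ s, K (s, t) ∂m) ∂m = ∫ s, (∫ t, K (s, t) ∂m) ∂m := by
    have := integral_integral_swap (f := fun t s => K (s, t)) (μ := m) (ν := m) ?_
    · exact this
    · exact hKint.swap
  have hL : ∫ t in (0:ℝ)..T, (∫ s in (0:ℝ)..t, f s) * g t
      = ∫ t, (∫ s, K (s, t) ∂m) ∂m := by
    rw [integral_of_le hT]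
    refine setIntegral_congr_fun measurableSet_Ioc fun t ht => ?_
    have h1 : ∀ s, K (s, t) = (Iic t).indicator (fun s => f s * g t) s := by
      intro s
      simp only [hK, indicator_apply, Set.mem_setOf_eq, Set.mem_Iic]
    simp only [h1]
    rw [MeasureTheory.integral_indicator measurableSet_Iic, Measure.restrict_restrict measurableSet_Iic]
    have h2 : Iic t ∩ Ioc 0 T = Ioc 0 t := by
      ext u; simp only [Set.mem_inter_iff, Set.mem_Iic, Set.mem_Ioc]
      constructor
      · rintro ⟨h3, h4, h5⟩; exact ⟨h4, h3⟩
      · rintro ⟨h4, h3⟩; exact ⟨h3, h4, h3.trans ht.2⟩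
    rw [h2, MeasureTheory.integral_mul_const, intervalIntegral.integral_of_le ht.1.le]
  have hR : ∫ s in (0:ℝ)..T, f s * ∫ t in s..T, g t
      = ∫ s, (∫ t, K (s, t) ∂m) ∂m := by
    rw [integral_of_le hT]
    refine setIntegral_congr_fun measurableSet_Ioc fun s hs => ?_
    have h1 : ∀ t, K (s, t) = (Ici s).indicator (fun t => f s * g t) t := by
      intro t
      simp only [hK, indicator_apply, Set.mem_setOf_eq, Set.mem_Ici]
    simp only [h1]
    rw [MeasureTheory.integral_indicator measurableSet_Ici, Measure.restrict_restrict measurableSet_Ici]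
    have h2 : Ici s ∩ Ioc 0 T = Icc s T := by
      ext u; simp only [Set.mem_inter_iff, Set.mem_Ici, Set.mem_Ioc, Set.mem_Icc]
      constructor
      · rintro ⟨h3, _, h5⟩; exact ⟨h3, h5⟩
      · rintro ⟨h3, h5⟩; exact ⟨h3, hs.1.trans_le h3, h5⟩
    rw [h2, ← Measure.restrict_congr_set Ioc_ae_eq_Icc, MeasureTheory.integral_const_mul,
      intervalIntegral.integral_of_le hs.2]
  rw [hL, hR, hswap]


section Det

variable {T : ℝ}

lemma ii {f : ℝ → ℝ} (h : IntegrableOn f (Ioc 0 T)) {c d : ℝ}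
    (hc : c ∈ Icc 0 T) (hd : d ∈ Icc 0 T) : IntervalIntegrable f volume c d := by
  rw [intervalIntegrable_iff]
  exact h.mono_set (Set.Ioc_subset_Ioc (le_inf hc.1 hd.1) (sup_le hc.2 hd.2))

lemma primitive_bound {f : ℝ → ℝ} (h : IntegrableOn f (Ioc 0 T)) {c d : ℝ}
    (hc : c ∈ Icc 0 T) (hd : d ∈ Icc 0 T) :
    |∫ s in c..d, f s| ≤ ∫ s in Ioc 0 T, |f s| := by
  have h1 : |∫ s in c..d, f s| ≤ ∫ s in Set.uIoc c d, |f s| := by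
    simpa [Real.norm_eq_abs] using
      (intervalIntegral.norm_integral_le_integral_norm_uIoc (f := f) (a := c) (b := d) (μ := volume))
  refine h1.trans ?_
  refine setIntegral_mono_set h.abs (Filter.Eventually.of_forall fun x => abs_nonneg _) ?_
  refine (HasSubset.Subset.eventuallyLE ?_)
  exact Set.Ioc_subset_Ioc (le_inf hc.1 hd.1) (sup_le hc.2 hd.2)

lemma cont_primitive {f : ℝ → ℝ} (h : IntegrableOn f (Ioc 0 T)) :
    ContinuousOn (fun t => ∫ s in (0:ℝ)..t, f s) (Icc 0 T) := by
  have h' : IntegrableOn f (Icc 0 T) := by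
    rwa [integrableOn_Icc_iff_integrableOn_Ioc]
  have := intervalIntegral.continuousOn_primitive (f := f) (a := 0) (b := T) (μ := volume) h'
  refine this.congr fun t ht => ?_
  rw [intervalIntegral.integral_of_le ht.1]

/-- bounded (on the interval) times integrable -/
lemma bdd_mul_int {u v : ℝ → ℝ} {C : ℝ}
    (hu : AEStronglyMeasurable u (volume.restrict (Ioc 0 T)))
    (hubd : ∀ t ∈ Ioc (0:ℝ) T, |u t| ≤ C)
    (hv : IntegrableOn v (Ioc 0 T)) :
    IntegrableOn (fun t => u t * v t) (Ioc 0 T) := by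
  refine Integrable.bdd_mul (c := C) hv hu ?_
  refine (ae_restrict_iff' measurableSet_Ioc).mpr (Filter.Eventually.of_forall ?_)
  simpa [Real.norm_eq_abs] using hubd

lemma int_of_bdd {u : ℝ → ℝ} {C : ℝ}
    (hu : AEStronglyMeasurable u (volume.restrict (Ioc 0 T)))
    (hubd : ∀ t ∈ Ioc (0:ℝ) T, |u t| ≤ C) :
    IntegrableOn u (Ioc 0 T) := by
  have : IntegrableOn (fun t => u t * (1:ℝ)) (Ioc 0 T) := by
    refine bdd_mul_int hu hubd (integrable_const 1)
  simpa using this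

end Det



section Det2

variable {T a Ψ φ Q0 : ℝ} {A V W q r : ℝ → ℝ}

lemma ii0T (hT : (0:ℝ) ≤ T) {f : ℝ → ℝ} (h : IntegrableOn f (Ioc 0 T)) :
    IntervalIntegrable f volume 0 T := by
  rw [intervalIntegrable_iff, uIoc_of_le hT]; exact h

lemma int_mul_bdd {u v : ℝ → ℝ} {C : ℝ}
    (hu : AEStronglyMeasurable u (volume.restrict (Ioc 0 T)))
    (hubd : ∀ t ∈ Ioc (0:ℝ) T, |u t| ≤ C)
    (hv : IntegrableOn v (Ioc 0 T)) :
    IntegrableOn (fun t => v t * u t) (Ioc 0 T) :=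
  (bdd_mul_int hu hubd hv).congr (Filter.Eventually.of_forall fun t => mul_comm _ _)

section Main

variable (hT : 0 < T)
  (hA : IntegrableOn A (Ioc 0 T)) (hV : IntegrableOn V (Ioc 0 T))
  (hW : IntegrableOn W (Ioc 0 T))
  (hVV : IntegrableOn (fun t => V t * V t) (Ioc 0 T))
  (hVW : IntegrableOn (fun t => V t * W t) (Ioc 0 T))
  (hWW : IntegrableOn (fun t => W t * W t) (Ioc 0 T))
  (hq : q = fun t => Q0 + ∫ s in (0:ℝ)..t, V s)
  (hr : r = fun t => ∫ s in (0:ℝ)..t, W s)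

section Facts
include hT hV hq

lemma q_cont : ContinuousOn q (Icc 0 T) := by
  rw [hq]; exact continuousOn_const.add (cont_primitive hV)

lemma q_meas : AEStronglyMeasurable q (volume.restrict (Ioc 0 T)) :=
  (((q_cont (hT := hT) hV hq).mono Ioc_subset_Icc_self).aestronglyMeasurable measurableSet_Ioc)

lemma q_bdd : ∀ t ∈ Ioc (0:ℝ) T, |q t| ≤ |Q0| + ∫ s in Ioc (0:ℝ) T, |V s| := by
  intro t ht
  rw [hq]
  refine (abs_add_le _ _).trans (add_le_add le_rfl ?_)
  exact primitive_bound hV ⟨le_refl 0, hT.le⟩ ⟨ht.1.le, ht.2⟩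

lemma q_int : IntegrableOn q (Ioc 0 T) :=
  int_of_bdd (q_meas (hT := hT) hV hq) (q_bdd (hT := hT) hV hq)

end Facts

include hT hA hV hW hVV hVW hWW hq hr

lemma det_expand (ε : ℝ) :
    (∫ t in (0:ℝ)..T, ((Q0 + ∫ s in (0:ℝ)..t, (V s + ε * W s)) * A t
        - a * (V t + ε * W t) ^ 2
        - 2 * Ψ * (V t + ε * W t) * (Q0 + ∫ s in (0:ℝ)..t, (V s + ε * W s))
        - φ * (Q0 + ∫ s in (0:ℝ)..t, (V s + ε * W s)) ^ 2))
    = (∫ t in (0:ℝ)..T, (q t * A t - a * (V t * V t) - 2 * Ψ * (V t * q t)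
          - φ * (q t * q t)))
      + ε * (∫ t in (0:ℝ)..T, (r t * A t - 2 * a * (V t * W t)
          - 2 * Ψ * (W t * q t + r t * V t) - 2 * φ * (r t * q t)))
      + ε ^ 2 * (∫ t in (0:ℝ)..T, (-(a * (W t * W t)) - 2 * Ψ * (W t * r t)
          - φ * (r t * r t))) := by
  have hqm := q_meas (hT := hT) hV hq
  have hqb := q_bdd (hT := hT) hV hq
  have hiq := q_int (hT := hT) hV hq
  have hrm : AEStronglyMeasurable r (volume.restrict (Ioc 0 T)) :=
    q_meas (Q0 := 0) (hT := hT) hW (by rw [hr]; funext t; rw [zero_add])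
  have hrb : ∀ t ∈ Ioc (0:ℝ) T, |r t| ≤ |(0:ℝ)| + ∫ s in Ioc (0:ℝ) T, |W s| :=
    q_bdd (Q0 := 0) (hT := hT) hW (by rw [hr]; funext t; rw [zero_add])
  have hir : IntegrableOn r (Ioc 0 T) := int_of_bdd hrm hrb
  -- integrability of all the products
  have iqA : IntegrableOn (fun t => q t * A t) (Ioc 0 T) := bdd_mul_int hqm hqb hA
  have iVq : IntegrableOn (fun t => V t * q t) (Ioc 0 T) := int_mul_bdd hqm hqb hV
  have iqq : IntegrableOn (fun t => q t * q t) (Ioc 0 T) := bdd_mul_int hqm hqb hiq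
  have irA : IntegrableOn (fun t => r t * A t) (Ioc 0 T) := bdd_mul_int hrm hrb hA
  have iWq : IntegrableOn (fun t => W t * q t) (Ioc 0 T) := int_mul_bdd hqm hqb hW
  have irV : IntegrableOn (fun t => r t * V t) (Ioc 0 T) := bdd_mul_int hrm hrb hV
  have irq : IntegrableOn (fun t => r t * q t) (Ioc 0 T) := bdd_mul_int hrm hrb hiq
  have iWr : IntegrableOn (fun t => W t * r t) (Ioc 0 T) := int_mul_bdd hrm hrb hW
  have irr : IntegrableOn (fun t => r t * r t) (Ioc 0 T) := bdd_mul_int hrm hrb hir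
  have i0 : IntervalIntegrable (fun t => q t * A t - a * (V t * V t)
      - 2 * Ψ * (V t * q t) - φ * (q t * q t)) volume 0 T :=
    ii0T hT.le (((iqA.sub (hVV.const_mul a)).sub (iVq.const_mul (2 * Ψ))).sub
      (iqq.const_mul φ))
  have il : IntervalIntegrable (fun t => r t * A t - 2 * a * (V t * W t)
      - 2 * Ψ * (W t * q t + r t * V t) - 2 * φ * (r t * q t)) volume 0 T :=
    ii0T hT.le (((irA.sub (hVW.const_mul (2 * a))).sub
      ((iWq.add irV).const_mul (2 * Ψ))).sub (irq.const_mul (2 * φ)))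
  have ih : IntervalIntegrable (fun t => -(a * (W t * W t)) - 2 * Ψ * (W t * r t)
      - φ * (r t * r t)) volume 0 T :=
    ii0T hT.le ((((hWW.const_mul a).neg).sub (iWr.const_mul (2 * Ψ))).sub
      (irr.const_mul φ))
  have key : Set.EqOn
      (fun t => ((Q0 + ∫ s in (0:ℝ)..t, (V s + ε * W s)) * A t
        - a * (V t + ε * W t) ^ 2
        - 2 * Ψ * (V t + ε * W t) * (Q0 + ∫ s in (0:ℝ)..t, (V s + ε * W s))
        - φ * (Q0 + ∫ s in (0:ℝ)..t, (V s + ε * W s)) ^ 2))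
      (fun t => (q t * A t - a * (V t * V t) - 2 * Ψ * (V t * q t) - φ * (q t * q t))
        + ((r t * A t - 2 * a * (V t * W t) - 2 * Ψ * (W t * q t + r t * V t)
            - 2 * φ * (r t * q t)) * ε
          + (-(a * (W t * W t)) - 2 * Ψ * (W t * r t) - φ * (r t * r t)) * ε ^ 2))
      (Set.uIcc 0 T) := by
    intro t ht
    rw [uIcc_of_le hT.le] at ht
    have h2 : ∫ s in (0:ℝ)..t, (V s + ε * W s)
        = (∫ s in (0:ℝ)..t, V s) + ε * ∫ s in (0:ℝ)..t, W s := by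
      rw [intervalIntegral.integral_add (ii hV ⟨le_refl 0, hT.le⟩ ht)
        ((ii hW ⟨le_refl 0, hT.le⟩ ht).const_mul ε), intervalIntegral.integral_const_mul]
    simp only [hq, hr]
    rw [h2]
    ring
  rw [intervalIntegral.integral_congr key,
    intervalIntegral.integral_add i0 ((il.mul_const ε).add (ih.mul_const (ε ^ 2))),
    intervalIntegral.integral_add (il.mul_const ε) (ih.mul_const (ε ^ 2)),
    intervalIntegral.integral_mul_const, intervalIntegral.integral_mul_const]
  ring

lemma det_target :
    (∫ t in (0:ℝ)..T, (r t * A t - 2 * a * (V t * W t)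
        - 2 * Ψ * (W t * q t + r t * V t) - 2 * φ * (r t * q t)))
    = ∫ t in (0:ℝ)..T, W t * (-2 * a * V t - 2 * Ψ * q T
        + ∫ u in t..T, (A u - 2 * φ * q u)) := by
  have hqm := q_meas (hT := hT) hV hq
  have hqb := q_bdd (hT := hT) hV hq
  have hiq := q_int (hT := hT) hV hq
  have hrm : AEStronglyMeasurable r (volume.restrict (Ioc 0 T)) :=
    q_meas (Q0 := 0) (hT := hT) hW (by rw [hr]; funext t; rw [zero_add])
  have hrb : ∀ t ∈ Ioc (0:ℝ) T, |r t| ≤ |(0:ℝ)| + ∫ s in Ioc (0:ℝ) T, |W s| :=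
    q_bdd (Q0 := 0) (hT := hT) hW (by rw [hr]; funext t; rw [zero_add])
  have hir : IntegrableOn r (Ioc 0 T) := int_of_bdd hrm hrb
  have irA : IntegrableOn (fun t => r t * A t) (Ioc 0 T) := bdd_mul_int hrm hrb hA
  have iWq : IntegrableOn (fun t => W t * q t) (Ioc 0 T) := int_mul_bdd hqm hqb hW
  have irV : IntegrableOn (fun t => r t * V t) (Ioc 0 T) := bdd_mul_int hrm hrb hV
  have irq : IntegrableOn (fun t => r t * q t) (Ioc 0 T) := bdd_mul_int hrm hrb hiq
  -- the two "tail primitives"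
  have hB1m : AEStronglyMeasurable (fun s => ∫ u in s..T, A u)
      (volume.restrict (Ioc 0 T)) := by
    have hc : ContinuousOn (fun s => (∫ u in (0:ℝ)..T, A u) - ∫ u in (0:ℝ)..s, A u)
        (Icc 0 T) := continuousOn_const.sub (cont_primitive hA)
    have hc2 : ContinuousOn (fun s => ∫ u in s..T, A u) (Icc 0 T) := by
      refine hc.congr fun s hs => ?_
      exact (intervalIntegral.integral_interval_sub_left (ii hA ⟨le_refl 0, hT.le⟩ ⟨hT.le, le_refl T⟩)
        (ii hA ⟨le_refl 0, hT.le⟩ hs)).symm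
    exact (hc2.mono Ioc_subset_Icc_self).aestronglyMeasurable measurableSet_Ioc
  have hB1b : ∀ s ∈ Ioc (0:ℝ) T, |∫ u in s..T, A u| ≤ ∫ u in Ioc (0:ℝ) T, |A u| :=
    fun s hs => primitive_bound hA ⟨hs.1.le, hs.2⟩ ⟨hT.le, le_refl T⟩
  have hBqm : AEStronglyMeasurable (fun s => ∫ u in s..T, q u)
      (volume.restrict (Ioc 0 T)) := by
    have hc : ContinuousOn (fun s => (∫ u in (0:ℝ)..T, q u) - ∫ u in (0:ℝ)..s, q u)
        (Icc 0 T) := continuousOn_const.sub (cont_primitive hiq)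
    have hc2 : ContinuousOn (fun s => ∫ u in s..T, q u) (Icc 0 T) := by
      refine hc.congr fun s hs => ?_
      exact (intervalIntegral.integral_interval_sub_left (ii hiq ⟨le_refl 0, hT.le⟩ ⟨hT.le, le_refl T⟩)
        (ii hiq ⟨le_refl 0, hT.le⟩ hs)).symm
    exact (hc2.mono Ioc_subset_Icc_self).aestronglyMeasurable measurableSet_Ioc
  have hBqb : ∀ s ∈ Ioc (0:ℝ) T, |∫ u in s..T, q u| ≤ ∫ u in Ioc (0:ℝ) T, |q u| :=
    fun s hs => primitive_bound hiq ⟨hs.1.le, hs.2⟩ ⟨hT.le, le_refl T⟩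
  have iWB1 : IntegrableOn (fun t => W t * ∫ u in t..T, A u) (Ioc 0 T) :=
    int_mul_bdd hB1m hB1b hW
  have iWBq : IntegrableOn (fun t => W t * ∫ u in t..T, q u) (Ioc 0 T) :=
    int_mul_bdd hBqm hBqb hW
  -- triangle swaps
  have K1 : (∫ t in (0:ℝ)..T, r t * A t)
      = ∫ s in (0:ℝ)..T, W s * ∫ u in s..T, A u := by
    simp only [hr]
    exact triangle_swap hT.le hW hA
  have K2 : (∫ t in (0:ℝ)..T, r t * q t)
      = ∫ s in (0:ℝ)..T, W s * ∫ u in s..T, q u := by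
    simp only [hr]
    exact triangle_swap hT.le hW hiq
  have K3 : (∫ t in (0:ℝ)..T, r t * V t)
      = ∫ s in (0:ℝ)..T, (q T * W s - W s * q s) := by
    simp only [hr]
    rw [triangle_swap hT.le hW hV]
    refine intervalIntegral.integral_congr fun s hs => ?_
    rw [uIcc_of_le hT.le] at hs
    have : ∫ u in s..T, V u = q T - q s := by
      simp only [hq]
      rw [← intervalIntegral.integral_interval_sub_left
        (ii hV ⟨le_refl 0, hT.le⟩ ⟨hT.le, le_refl T⟩) (ii hV ⟨le_refl 0, hT.le⟩ hs)]
      ring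
    rw [this]; ring
  -- split the left-hand side
  have hsplitL : (∫ t in (0:ℝ)..T, (r t * A t - 2 * a * (V t * W t)
        - 2 * Ψ * (W t * q t + r t * V t) - 2 * φ * (r t * q t)))
      = (∫ t in (0:ℝ)..T, r t * A t) - 2 * a * (∫ t in (0:ℝ)..T, V t * W t)
        - 2 * Ψ * ((∫ t in (0:ℝ)..T, W t * q t) + (∫ t in (0:ℝ)..T, r t * V t))
        - 2 * φ * (∫ t in (0:ℝ)..T, r t * q t) := by
    rw [intervalIntegral.integral_sub (((ii0T hT.le irA).sub
        ((ii0T hT.le hVW).const_mul (2 * a))).sub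
        (((ii0T hT.le iWq).add (ii0T hT.le irV)).const_mul (2 * Ψ)))
      ((ii0T hT.le irq).const_mul (2 * φ)),
      intervalIntegral.integral_sub ((ii0T hT.le irA).sub
        ((ii0T hT.le hVW).const_mul (2 * a)))
        (((ii0T hT.le iWq).add (ii0T hT.le irV)).const_mul (2 * Ψ)),
      intervalIntegral.integral_sub (ii0T hT.le irA) ((ii0T hT.le hVW).const_mul (2 * a)),
      intervalIntegral.integral_const_mul, intervalIntegral.integral_const_mul,
      intervalIntegral.integral_const_mul,
      intervalIntegral.integral_add (ii0T hT.le iWq) (ii0T hT.le irV)]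
  -- split the right-hand side
  have hsplitR : (∫ t in (0:ℝ)..T, W t * (-2 * a * V t - 2 * Ψ * q T
        + ∫ u in t..T, (A u - 2 * φ * q u)))
      = -(2 * a) * (∫ t in (0:ℝ)..T, V t * W t)
        + (-(2 * Ψ) * q T) * (∫ t in (0:ℝ)..T, W t)
        + ((∫ t in (0:ℝ)..T, W t * ∫ u in t..T, A u)
          + (-(2 * φ)) * (∫ t in (0:ℝ)..T, W t * ∫ u in t..T, q u)) := by
    have keyR : Set.EqOn
        (fun t => W t * (-2 * a * V t - 2 * Ψ * q T + ∫ u in t..T, (A u - 2 * φ * q u)))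
        (fun t => -(2 * a) * (V t * W t) + (-(2 * Ψ) * q T) * W t
          + ((W t * ∫ u in t..T, A u) + (-(2 * φ)) * (W t * ∫ u in t..T, q u)))
        (Set.uIcc 0 T) := by
      intro t ht
      rw [uIcc_of_le hT.le] at ht
      have h3 : ∫ u in t..T, (A u - 2 * φ * q u)
          = (∫ u in t..T, A u) - 2 * φ * ∫ u in t..T, q u := by
        rw [intervalIntegral.integral_sub (ii hA ht ⟨hT.le, le_refl T⟩)
          ((ii hiq ht ⟨hT.le, le_refl T⟩).const_mul (2 * φ)),
          intervalIntegral.integral_const_mul]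
      simp only []
      rw [h3]; ring
    rw [intervalIntegral.integral_congr keyR,
      intervalIntegral.integral_add (((ii0T hT.le hVW).const_mul (-(2 * a))).add
        ((ii0T hT.le hW).const_mul (-(2 * Ψ) * q T)))
        ((ii0T hT.le iWB1).add ((ii0T hT.le iWBq).const_mul (-(2 * φ)))),
      intervalIntegral.integral_add ((ii0T hT.le hVW).const_mul (-(2 * a)))
        ((ii0T hT.le hW).const_mul (-(2 * Ψ) * q T)),
      intervalIntegral.integral_add (ii0T hT.le iWB1)
        ((ii0T hT.le iWBq).const_mul (-(2 * φ))),
      intervalIntegral.integral_const_mul, intervalIntegral.integral_const_mul,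
      intervalIntegral.integral_const_mul]
  have K3' : (∫ t in (0:ℝ)..T, r t * V t)
      = q T * (∫ t in (0:ℝ)..T, W t) - ∫ t in (0:ℝ)..T, W t * q t := by
    rw [K3, intervalIntegral.integral_sub ((ii0T hT.le hW).const_mul (q T))
      (ii0T hT.le iWq), intervalIntegral.integral_const_mul]
  rw [hsplitL, hsplitR, K1, K2, K3']
  ring

end Main

end Det2







variable (P : Measure Ω) [IsProbabilityMeasure P] {T : ℝ}

lemma finite_m (hT : 0 < T) : IsFiniteMeasure (volume.restrict (Ioc (0:ℝ) T)) := by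
  constructor
  rw [Measure.restrict_apply_univ]
  exact measure_Ioc_lt_top

lemma memLp_primitive (hT : 0 < T) {f : Ω × ℝ → ℝ}
    (hf : MemLp f 2 (P.prod (volume.restrict (Ioc (0:ℝ) T)))) :
    MemLp (fun z : Ω × ℝ => ∫ u in (0:ℝ)..z.2, f (z.1, u)) 2
      (P.prod (volume.restrict (Ioc (0:ℝ) T))) := by
  haveI := finite_m hT
  set m := volume.restrict (Ioc (0:ℝ) T) with hm
  -- a.e. facts
  have hsnd : ∀ᵐ z ∂(P.prod m), z.2 ∈ Ioc (0:ℝ) T :=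
    (Measure.quasiMeasurePreserving_snd (μ := P) (ν := m)).ae
      (ae_restrict_mem measurableSet_Ioc)
  have hsec2 : ∀ᵐ x ∂P, Integrable (fun u => f (x, u) * f (x, u)) m :=
    (integrable_mul_of_memL2 hf hf).prod_right_ae
  have hsec1 : ∀ᵐ x ∂P, Integrable (fun u => f (x, u)) m :=
    (hf.integrable one_le_two).prod_right_ae
  have hfst : ∀ᵐ z ∂(P.prod m),
      Integrable (fun u => f (z.1, u)) m ∧ Integrable (fun u => f (z.1, u) * f (z.1, u)) m :=
    (Measure.quasiMeasurePreserving_fst (μ := P) (ν := m)).ae (hsec1.and hsec2)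
  -- measurability
  have hmeas : AEStronglyMeasurable (fun z : Ω × ℝ => ∫ u in (0:ℝ)..z.2, f (z.1, u))
      (P.prod m) := by
    have hset : MeasurableSet {p : (Ω × ℝ) × ℝ | p.2 ∈ Ioc (0:ℝ) p.1.2} := by
      have : {p : (Ω × ℝ) × ℝ | p.2 ∈ Ioc (0:ℝ) p.1.2}
          = {p : (Ω × ℝ) × ℝ | (0:ℝ) < p.2} ∩ {p : (Ω × ℝ) × ℝ | p.2 ≤ p.1.2} := by
        ext p; simp [Set.mem_Ioc]
      rw [this]
      exact (measurableSet_lt measurable_const measurable_snd).inter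
        (measurableSet_le measurable_snd (measurable_fst.snd))
    have hF : StronglyMeasurable (fun p : (Ω × ℝ) × ℝ =>
        ({p : (Ω × ℝ) × ℝ | p.2 ∈ Ioc (0:ℝ) p.1.2}).indicator
          (fun p => hf.1.mk f (p.1.1, p.2)) p) :=
      (hf.1.stronglyMeasurable_mk.comp_measurable
        ((measurable_fst.fst).prodMk measurable_snd)).indicator hset
    have hG : StronglyMeasurable (fun z : Ω × ℝ =>
        ∫ u, ({p : (Ω × ℝ) × ℝ | p.2 ∈ Ioc (0:ℝ) p.1.2}).indicator
          (fun p => hf.1.mk f (p.1.1, p.2)) (z, u)) := hF.integral_prod_right'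
    refine ⟨_, hG, ?_⟩
    have hae : ∀ᵐ z ∂(P.prod m), (fun u => f (z.1, u)) =ᵐ[m] fun u => hf.1.mk f (z.1, u) :=
      (Measure.quasiMeasurePreserving_fst (μ := P) (ν := m)).ae
        (Measure.ae_ae_of_ae_prod hf.1.ae_eq_mk)
    filter_upwards [hsnd, hae] with z hz2 hzeq
    have h1 : ∫ u in (0:ℝ)..z.2, f (z.1, u)
        = ∫ u in Ioc (0:ℝ) z.2, f (z.1, u) ∂volume := integral_of_le hz2.1.le
    have hsub : (fun u => f (z.1, u)) =ᵐ[volume.restrict (Ioc (0:ℝ) z.2)]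
        fun u => hf.1.mk f (z.1, u) :=
      ae_restrict_of_ae_restrict_of_subset (Ioc_subset_Ioc_right hz2.2) hzeq
    have h2 : ∫ u in Ioc (0:ℝ) z.2, f (z.1, u) ∂volume
        = ∫ u in Ioc (0:ℝ) z.2, hf.1.mk f (z.1, u) ∂volume := integral_congr_ae hsub
    have h3 : ∫ u in Ioc (0:ℝ) z.2, hf.1.mk f (z.1, u) ∂volume
        = ∫ u, (Ioc (0:ℝ) z.2).indicator (fun u => hf.1.mk f (z.1, u)) u ∂volume :=
      (MeasureTheory.integral_indicator measurableSet_Ioc).symm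
    have h4 : ∀ u, (Ioc (0:ℝ) z.2).indicator (fun u => hf.1.mk f (z.1, u)) u
        = ({p : (Ω × ℝ) × ℝ | p.2 ∈ Ioc (0:ℝ) p.1.2}).indicator
          (fun p => hf.1.mk f (p.1.1, p.2)) (z, u) := by
      intro u
      simp only [indicator_apply, Set.mem_setOf_eq, Set.mem_Ioc]
    rw [h1, h2, h3]
    exact integral_congr_ae (Filter.Eventually.of_forall h4)
  -- square-integrability
  rw [memLp_two_iff_integrable_sq hmeas]
  have hD : Integrable (fun z : Ω × ℝ => T * ∫ u, f (z.1, u) * f (z.1, u) ∂m)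
      (P.prod m) := by
    have h1 : Integrable (fun x => ∫ u, f (x, u) * f (x, u) ∂m) P :=
      (integrable_mul_of_memL2 hf hf).integral_prod_left
    have h2 : Integrable (fun z : Ω × ℝ =>
        (∫ u, f (z.1, u) * f (z.1, u) ∂m) * (1:ℝ)) (P.prod m) :=
      Integrable.mul_prod h1 (integrable_const 1)
    simpa [mul_one] using (h2.const_mul T)
  refine Integrable.mono' hD ?_ ?_
  · exact (continuous_pow 2).comp_aestronglyMeasurable hmeas
  filter_upwards [hsnd, hfst] with z hz2 hint
  obtain ⟨h1, h2⟩ := hint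
  set h : ℝ → ℝ := fun u => f (z.1, u) with hh
  have hmem : MemLp h 2 m := by
    rw [memLp_two_iff_integrable_sq h1.aestronglyMeasurable]
    refine h2.congr (Filter.Eventually.of_forall fun u => ?_)
    simp only [hh, pow_two]
  -- step 1 : |∫ 0..z.2 h| ≤ ∫ |h| dm
  have step1 : |∫ u in (0:ℝ)..z.2, h u| ≤ ∫ u, |h u| ∂m := by
    have a1 : |∫ u in (0:ℝ)..z.2, h u| ≤ ∫ u in Set.uIoc (0:ℝ) z.2, |h u| ∂volume := by
      simpa [Real.norm_eq_abs] using
        intervalIntegral.norm_integral_le_integral_norm_uIoc (f := h) (a := 0) (b := z.2)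
          (μ := volume)
    refine a1.trans ?_
    rw [uIoc_of_le hz2.1.le]
    exact setIntegral_mono_set h1.abs (Filter.Eventually.of_forall fun u => abs_nonneg _)
      (HasSubset.Subset.eventuallyLE (Ioc_subset_Ioc_right hz2.2))
  -- step 2 : Cauchy-Schwarz
  have hT' : (m univ).toReal = T := by
    rw [hm, Measure.restrict_apply_univ, Real.volume_Ioc]
    simp [hT.le]
  have step2 : (∫ u, |h u| ∂m) ^ 2 ≤ T * ∫ u, h u * h u ∂m := by
    have hconj : Real.HolderConjugate 2 2 := { inv_add_inv_eq_inv := by norm_num, left_pos := by norm_num, right_pos := by norm_num }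
    have habs : MemLp (fun u => |h u|) (ENNReal.ofReal 2) m := by
      have : (ENNReal.ofReal 2) = (2 : ℝ≥0∞) := by norm_num
      rw [this]
      simpa [Real.norm_eq_abs] using hmem.norm
    have hone : MemLp (fun _ : ℝ => (1:ℝ)) (ENNReal.ofReal 2) m := memLp_const 1
    have CS := integral_mul_le_Lp_mul_Lq_of_nonneg hconj
      (Filter.Eventually.of_forall fun u => abs_nonneg (h u))
      (Filter.Eventually.of_forall fun _ => zero_le_one) habs hone
    simp only [mul_one] at CS
    have e1 : ∫ u, |h u| ^ (2:ℝ) ∂m = ∫ u, h u * h u ∂m := by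
      refine integral_congr_ae (Filter.Eventually.of_forall fun u => ?_)
      show |h u| ^ (2:ℝ) = h u * h u
      rw [show ((2:ℝ)) = ((2:ℕ):ℝ) by norm_num, Real.rpow_natCast]
      rw [pow_two, abs_mul_abs_self]
    have e2 : ∫ u, (1:ℝ) ^ (2:ℝ) ∂m = T := by
      rw [show ((1:ℝ) ^ (2:ℝ)) = (1:ℝ) from Real.one_rpow 2]
      rw [MeasureTheory.integral_const, smul_eq_mul, mul_one, measureReal_def, hT']
    rw [e1, e2] at CS
    have hX : 0 ≤ ∫ u, h u * h u ∂m :=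
      integral_nonneg fun u => mul_self_nonneg _
    have hM : 0 ≤ ∫ u, |h u| ∂m := integral_nonneg fun u => abs_nonneg _
    calc (∫ u, |h u| ∂m) ^ 2
        ≤ ((∫ u, h u * h u ∂m) ^ ((1:ℝ)/2) * T ^ ((1:ℝ)/2)) ^ 2 := by
          exact pow_le_pow_left₀ hM CS 2
      _ = T * ∫ u, h u * h u ∂m := by
          rw [mul_pow, ← Real.rpow_natCast ((∫ u, h u * h u ∂m) ^ ((1:ℝ)/2)) 2,
            ← Real.rpow_natCast (T ^ ((1:ℝ)/2)) 2,
            ← Real.rpow_mul hX, ← Real.rpow_mul hT.le,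
            show ((1:ℝ)/2) * ((2:ℕ):ℝ) = 1 by norm_num,
            Real.rpow_one, Real.rpow_one]
          ring
  have : ‖(∫ u in (0:ℝ)..z.2, f (z.1, u)) ^ 2‖ = |∫ u in (0:ℝ)..z.2, h u| ^ 2 := by
    rw [Real.norm_eq_abs, abs_pow, sq_abs, ← sq_abs]
  rw [this]
  refine le_trans (pow_le_pow_left₀ (abs_nonneg _) step1 2) step2



end GxAux


/-- auxiliary: the primitive of the direction `w`. -/
def rP (w : Ω × ℝ → ℝ) (x : Ω) (t : ℝ) : ℝ := ∫ u in (0:ℝ)..t, w (x, u)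

/-- auxiliary: inner integral of the zeroth-order term. -/
def I0f (T a Ψ φ : ℝ) (Q₀ : Ω → ℝ) (α ν : Ω × ℝ → ℝ) : Ω → ℝ := fun x =>
  ∫ t in (0:ℝ)..T, (inventory Q₀ ν x t * α (x, t) - a * (ν (x, t) * ν (x, t))
    - 2 * Ψ * (ν (x, t) * inventory Q₀ ν x t)
    - φ * (inventory Q₀ ν x t * inventory Q₀ ν x t))

/-- auxiliary: inner integral of the first-order term. -/
def Linf (T a Ψ φ : ℝ) (Q₀ : Ω → ℝ) (α ν w : Ω × ℝ → ℝ) : Ω → ℝ := fun x =>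
  ∫ t in (0:ℝ)..T, (rP w x t * α (x, t) - 2 * a * (ν (x, t) * w (x, t))
    - 2 * Ψ * (w (x, t) * inventory Q₀ ν x t + rP w x t * ν (x, t))
    - 2 * φ * (rP w x t * inventory Q₀ ν x t))

/-- auxiliary: inner integral of the second-order term. -/
def Qdf (T a Ψ φ : ℝ) (w : Ω × ℝ → ℝ) : Ω → ℝ := fun x =>
  ∫ t in (0:ℝ)..T, (-(a * (w (x, t) * w (x, t))) - 2 * Ψ * (w (x, t) * rP w x t)
    - φ * (rP w x t * rP w x t))

/-- Lemma 3.2 of the paper: the Gâteaux derivative of `H` at `ν` in the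
direction `w` exists, i.e. the limit as `ε → 0` of `(H(ν+εw) − H(ν))/ε` exists, and equals
`E[∫₀ᵀ w_t·( −2a·ν_t − 2Ψ·q^ν_T + ∫_t^T (α_u − 2φ·q^ν_u) du ) dt]`. -/
theorem gateaux_derivative
    (P : Measure Ω) [IsProbabilityMeasure P]
    (T : ℝ) (hT : 0 < T) (a Ψ φ : ℝ) (ha : 0 < a) (hΨ : 0 < Ψ) (hφ : 0 ≤ φ)
    (μ : Measure ℝ) (hμ : μ = volume.restrict (Set.Icc (0:ℝ) T))
    (Q₀ : Ω → ℝ) (hQ₀ : MemLp Q₀ 2 P)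
    (α : Ω × ℝ → ℝ) (hα : MemLp α 2 (P.prod μ))
    (ν w : Ω × ℝ → ℝ)
    (hν : MemLp ν 2 (P.prod μ)) (hw : MemLp w 2 (P.prod μ)) :
    Filter.Tendsto
      (fun ε : ℝ =>
        (objH P T a Ψ φ Q₀ α (fun p => ν p + ε * w p) - objH P T a Ψ φ Q₀ α ν) / ε)
      (nhdsWithin 0 {(0:ℝ)}ᶜ)
      (nhds (∫ x, (∫ t in (0:ℝ)..T,
        w (x, t) * (-2 * a * ν (x, t) - 2 * Ψ * inventory Q₀ ν x T
          + ∫ u in t..T, (α (x, u) - 2 * φ * inventory Q₀ ν x u))) ∂P)) := by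
  subst hμ
  have hmeq : volume.restrict (Set.Icc (0:ℝ) T) = volume.restrict (Set.Ioc (0:ℝ) T) :=
    (Measure.restrict_congr_set Ioc_ae_eq_Icc).symm
  rw [hmeq] at hα hν hw
  haveI : IsFiniteMeasure (volume.restrict (Set.Ioc (0:ℝ) T)) := GxAux.finite_m hT
  have hGν := GxAux.memLp_primitive P hT hν
  have hGw := GxAux.memLp_primitive P hT hw
  have hQc : MemLp (fun z : Ω × ℝ => Q₀ z.1) 2
      (P.prod (volume.restrict (Set.Ioc (0:ℝ) T))) := by
    have hsm : AEStronglyMeasurable (fun z : Ω × ℝ => Q₀ z.1)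
        (P.prod (volume.restrict (Set.Ioc (0:ℝ) T))) :=
      hQ₀.1.comp_quasiMeasurePreserving Measure.quasiMeasurePreserving_fst
    rw [memLp_two_iff_integrable_sq hsm]
    have h2 : Integrable (fun z : Ω × ℝ => (Q₀ z.1 ^ 2) * (1:ℝ))
        (P.prod (volume.restrict (Set.Ioc (0:ℝ) T))) :=
      Integrable.mul_prod hQ₀.integrable_sq (integrable_const 1)
    simpa [mul_one] using h2
  have hQp : MemLp (fun z : Ω × ℝ => inventory Q₀ ν z.1 z.2) 2
      (P.prod (volume.restrict (Set.Ioc (0:ℝ) T))) := hQc.add hGν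
  have hRp : MemLp (fun z : Ω × ℝ => rP w z.1 z.2) 2
      (P.prod (volume.restrict (Set.Ioc (0:ℝ) T))) := hGw
  -- product-level integrability of the three integrands
  have hIF0 : Integrable (fun z : Ω × ℝ => inventory Q₀ ν z.1 z.2 * α z
      - a * (ν z * ν z) - 2 * Ψ * (ν z * inventory Q₀ ν z.1 z.2)
      - φ * (inventory Q₀ ν z.1 z.2 * inventory Q₀ ν z.1 z.2))
      (P.prod (volume.restrict (Set.Ioc (0:ℝ) T))) :=
    (((GxAux.integrable_mul_of_memL2 hQp hα).sub
      ((GxAux.integrable_mul_of_memL2 hν hν).const_mul a)).sub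
      ((GxAux.integrable_mul_of_memL2 hν hQp).const_mul (2 * Ψ))).sub
      ((GxAux.integrable_mul_of_memL2 hQp hQp).const_mul φ)
  have hIFL : Integrable (fun z : Ω × ℝ => rP w z.1 z.2 * α z
      - 2 * a * (ν z * w z)
      - 2 * Ψ * (w z * inventory Q₀ ν z.1 z.2 + rP w z.1 z.2 * ν z)
      - 2 * φ * (rP w z.1 z.2 * inventory Q₀ ν z.1 z.2))
      (P.prod (volume.restrict (Set.Ioc (0:ℝ) T))) :=
    (((GxAux.integrable_mul_of_memL2 hRp hα).sub
      ((GxAux.integrable_mul_of_memL2 hν hw).const_mul (2 * a))).sub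
      (((GxAux.integrable_mul_of_memL2 hw hQp).add
        (GxAux.integrable_mul_of_memL2 hRp hν)).const_mul (2 * Ψ))).sub
      ((GxAux.integrable_mul_of_memL2 hRp hQp).const_mul (2 * φ))
  have hIFQ : Integrable (fun z : Ω × ℝ => -(a * (w z * w z))
      - 2 * Ψ * (w z * rP w z.1 z.2) - φ * (rP w z.1 z.2 * rP w z.1 z.2))
      (P.prod (volume.restrict (Set.Ioc (0:ℝ) T))) :=
    ((((GxAux.integrable_mul_of_memL2 hw hw).const_mul a).neg).sub
      ((GxAux.integrable_mul_of_memL2 hw hRp).const_mul (2 * Ψ))).sub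
      ((GxAux.integrable_mul_of_memL2 hRp hRp).const_mul φ)
  -- outer integrability
  have hI0 : Integrable (I0f T a Ψ φ Q₀ α ν) P :=
    hIF0.integral_prod_left.congr (Filter.Eventually.of_forall fun x =>
      (intervalIntegral.integral_of_le hT.le).symm)
  have hLin : Integrable (Linf T a Ψ φ Q₀ α ν w) P :=
    hIFL.integral_prod_left.congr (Filter.Eventually.of_forall fun x =>
      (intervalIntegral.integral_of_le hT.le).symm)
  have hQd : Integrable (Qdf T a Ψ φ w) P :=
    hIFQ.integral_prod_left.congr (Filter.Eventually.of_forall fun x =>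
      (intervalIntegral.integral_of_le hT.le).symm)
  -- a.e. integrability of sections
  have hgood : ∀ᵐ x ∂P,
      (IntegrableOn (fun t => α (x, t)) (Set.Ioc 0 T) ∧
       IntegrableOn (fun t => ν (x, t)) (Set.Ioc 0 T) ∧
       IntegrableOn (fun t => w (x, t)) (Set.Ioc 0 T)) ∧
      (IntegrableOn (fun t => ν (x, t) * ν (x, t)) (Set.Ioc 0 T) ∧
       IntegrableOn (fun t => ν (x, t) * w (x, t)) (Set.Ioc 0 T) ∧
       IntegrableOn (fun t => w (x, t) * w (x, t)) (Set.Ioc 0 T)) := by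
    filter_upwards [(hα.integrable one_le_two).prod_right_ae,
      (hν.integrable one_le_two).prod_right_ae,
      (hw.integrable one_le_two).prod_right_ae,
      (GxAux.integrable_mul_of_memL2 hν hν).prod_right_ae,
      (GxAux.integrable_mul_of_memL2 hν hw).prod_right_ae,
      (GxAux.integrable_mul_of_memL2 hw hw).prod_right_ae] with x h1 h2 h3 h4 h5 h6
    exact ⟨⟨h1, h2, h3⟩, h4, h5, h6⟩
  -- the quadratic expansion of the objective
  have hexp : ∀ ε : ℝ, objH P T a Ψ φ Q₀ α (fun p => ν p + ε * w p)
      = (∫ x, I0f T a Ψ φ Q₀ α ν x ∂P) + ε * (∫ x, Linf T a Ψ φ Q₀ α ν w x ∂P)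
        + ε ^ 2 * (∫ x, Qdf T a Ψ φ w x ∂P) := by
    intro ε
    have h1 : objH P T a Ψ φ Q₀ α (fun p => ν p + ε * w p)
        = ∫ x, (I0f T a Ψ φ Q₀ α ν x + ε * Linf T a Ψ φ Q₀ α ν w x
            + ε ^ 2 * Qdf T a Ψ φ w x) ∂P := by
      refine integral_congr_ae ?_
      filter_upwards [hgood] with x hx
      obtain ⟨⟨g1, g2, g3⟩, g4, g5, g6⟩ := hx
      exact GxAux.det_expand hT g1 g2 g3 g4 g5 g6 rfl rfl ε
    rw [h1]
    have e1 : ∫ x, (I0f T a Ψ φ Q₀ α ν x + ε * Linf T a Ψ φ Q₀ α ν w x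
          + ε ^ 2 * Qdf T a Ψ φ w x) ∂P
        = (∫ x, (I0f T a Ψ φ Q₀ α ν x + ε * Linf T a Ψ φ Q₀ α ν w x) ∂P)
          + ∫ x, ε ^ 2 * Qdf T a Ψ φ w x ∂P :=
      integral_add (hI0.add (hLin.const_mul ε)) (hQd.const_mul (ε ^ 2))
    have e2 : ∫ x, (I0f T a Ψ φ Q₀ α ν x + ε * Linf T a Ψ φ Q₀ α ν w x) ∂P
        = (∫ x, I0f T a Ψ φ Q₀ α ν x ∂P) + ∫ x, ε * Linf T a Ψ φ Q₀ α ν w x ∂P :=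
      integral_add hI0 (hLin.const_mul ε)
    rw [e1, e2, integral_const_mul, integral_const_mul]
  have hG0 : objH P T a Ψ φ Q₀ α ν = ∫ x, I0f T a Ψ φ Q₀ α ν x ∂P := by
    refine integral_congr_ae (Filter.Eventually.of_forall fun x => ?_)
    refine intervalIntegral.integral_congr fun t ht => ?_
    show inventory Q₀ ν x t * α (x, t) - a * ν (x, t) ^ 2
        - 2 * Ψ * ν (x, t) * inventory Q₀ ν x t - φ * inventory Q₀ ν x t ^ 2
      = inventory Q₀ ν x t * α (x, t) - a * (ν (x, t) * ν (x, t))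
        - 2 * Ψ * (ν (x, t) * inventory Q₀ ν x t)
        - φ * (inventory Q₀ ν x t * inventory Q₀ ν x t)
    ring
  -- identification of the linear coefficient with the claimed limit
  have hLmatch : (∫ x, Linf T a Ψ φ Q₀ α ν w x ∂P)
      = ∫ x, (∫ t in (0:ℝ)..T,
          w (x, t) * (-2 * a * ν (x, t) - 2 * Ψ * inventory Q₀ ν x T
            + ∫ u in t..T, (α (x, u) - 2 * φ * inventory Q₀ ν x u))) ∂P := by
    refine integral_congr_ae ?_
    filter_upwards [hgood] with x hx
    obtain ⟨⟨g1, g2, g3⟩, g4, g5, g6⟩ := hx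
    exact GxAux.det_target hT g1 g2 g3 g4 g5 g6 rfl rfl
  rw [← hLmatch]
  have key : ∀ ε : ℝ, objH P T a Ψ φ Q₀ α (fun p => ν p + ε * w p)
      - objH P T a Ψ φ Q₀ α ν
      = ε * (∫ x, Linf T a Ψ φ Q₀ α ν w x ∂P)
        + ε ^ 2 * (∫ x, Qdf T a Ψ φ w x ∂P) := by
    intro ε
    rw [hexp ε, hG0]
    ring
  have htend : Filter.Tendsto
      (fun ε : ℝ => (∫ x, Linf T a Ψ φ Q₀ α ν w x ∂P)
        + ε * (∫ x, Qdf T a Ψ φ w x ∂P))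
      (nhdsWithin 0 {(0:ℝ)}ᶜ) (nhds (∫ x, Linf T a Ψ φ Q₀ α ν w x ∂P)) := by
    have hc : Filter.Tendsto
        (fun ε : ℝ => (∫ x, Linf T a Ψ φ Q₀ α ν w x ∂P)
          + ε * (∫ x, Qdf T a Ψ φ w x ∂P)) (nhds 0)
        (nhds ((∫ x, Linf T a Ψ φ Q₀ α ν w x ∂P)
          + 0 * (∫ x, Qdf T a Ψ φ w x ∂P))) :=
      (continuous_const.add (continuous_id.mul continuous_const)).tendsto 0
    simpa using hc.mono_left nhdsWithin_le_nhds
  refine Filter.Tendsto.congr' ?_ htend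
  filter_upwards [self_mem_nhdsWithin] with ε hε
  have hε' : ε ≠ 0 := by simpa using hε
  rw [key ε]
  field_simp

end
end

section
/- Let a>0, φ>0, Ψ>0, T>0 and let h be the explicit function h(t) = −2ξ·(Ψ·cosh(γ(T−t)) + ξ·sinh(γ(T−t)))/(ξ·cosh(γ(T−t)) + Ψ·sinh(γ(T−t))) with γ = √(φ/a), ξ = √(φ·a). If k : ℝ → ℝ is differentiable on [0,T], satisfies k'(t) = 2φ − k(t)²/(2a) for all t ∈ [0,T], and k(T) = −2Ψ, then k(t) = h(t) for all t ∈ [0,T]. -/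
/-- Theorem 3.4 (III) of the paper, uniqueness: any differentiable solution
`k` on `[0,T]` of the Riccati terminal-value problem `k' = 2φ − k²/(2a)`, `k(T) = −2Ψ`,
coincides on `[0,T]` with the explicit solution
`h(t) = −2ξ·(Ψ·cosh(γ(T−t)) + ξ·sinh(γ(T−t)))/(ξ·cosh(γ(T−t)) + Ψ·sinh(γ(T−t)))`,
where `γ = √(φ/a)` and `ξ = √(φa)`. -/
theorem riccati_solution_unique
    (a φ Ψ T : ℝ) (ha : 0 < a) (hφ : 0 < φ) (hΨ : 0 < Ψ) (hT : 0 < T)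
    (γ ξ : ℝ) (hγ : γ = Real.sqrt (φ / a)) (hξ : ξ = Real.sqrt (φ * a))
    (h : ℝ → ℝ)
    (hh : ∀ t, h t = -2 * ξ * (Ψ * Real.cosh (γ * (T - t)) + ξ * Real.sinh (γ * (T - t)))
        / (ξ * Real.cosh (γ * (T - t)) + Ψ * Real.sinh (γ * (T - t))))
    (k : ℝ → ℝ)
    (hk : ∀ t ∈ Set.Icc (0:ℝ) T, HasDerivAt k (2 * φ - (k t) ^ 2 / (2 * a)) t)
    (hkT : k T = -2 * Ψ) :
    ∀ t ∈ Set.Icc (0:ℝ) T, k t = h t := by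
  have hξpos : 0 < ξ := by rw [hξ]; positivity
  have hγpos : 0 < γ := by rw [hγ]; positivity
  have hξsq : ξ ^ 2 = φ * a := by rw [hξ, Real.sq_sqrt (by positivity)]
  have hγξ : γ * ξ = φ := by
    rw [hγ, hξ, ← Real.sqrt_mul (by positivity)]
    rw [show φ / a * (φ * a) = φ ^ 2 by field_simp]
    exact Real.sqrt_sq hφ.le
  -- denominator positive on [0,T]
  have hD : ∀ t ∈ Set.Icc (0:ℝ) T,
      0 < ξ * Real.cosh (γ * (T - t)) + Ψ * Real.sinh (γ * (T - t)) := by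
    intro t ht
    have hu : (0:ℝ) ≤ γ * (T - t) := by
      have := ht.2; nlinarith
    have h1 : (1:ℝ) ≤ Real.cosh (γ * (T - t)) := Real.one_le_cosh _
    have h2 : (0:ℝ) ≤ Real.sinh (γ * (T - t)) := by
      rw [← Real.sinh_zero]; exact Real.sinh_le_sinh.mpr hu
    nlinarith
  -- h satisfies the ODE on [0,T]
  have hfun : h = fun t => -2 * ξ * (Ψ * Real.cosh (γ * (T - t)) + ξ * Real.sinh (γ * (T - t)))
        / (ξ * Real.cosh (γ * (T - t)) + Ψ * Real.sinh (γ * (T - t))) := funext hh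
  have hderiv : ∀ t ∈ Set.Icc (0:ℝ) T, HasDerivAt h (2 * φ - (h t) ^ 2 / (2 * a)) t := by
    intro t ht
    have hu : HasDerivAt (fun t : ℝ => γ * (T - t)) (-γ) t := by
      simpa using ((hasDerivAt_id t).const_sub T).const_mul γ
    have hc : HasDerivAt (fun t : ℝ => Real.cosh (γ * (T - t)))
        (Real.sinh (γ * (T - t)) * (-γ)) t := hu.cosh
    have hs : HasDerivAt (fun t : ℝ => Real.sinh (γ * (T - t)))
        (Real.cosh (γ * (T - t)) * (-γ)) t := hu.sinh
    have hnum : HasDerivAt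
        (fun t : ℝ => -2 * ξ * (Ψ * Real.cosh (γ * (T - t)) + ξ * Real.sinh (γ * (T - t))))
        (-2 * ξ * (Ψ * (Real.sinh (γ * (T - t)) * (-γ)) + ξ * (Real.cosh (γ * (T - t)) * (-γ)))) t := by
      exact ((hc.const_mul Ψ).add (hs.const_mul ξ)).const_mul (-2 * ξ)
    have hden : HasDerivAt
        (fun t : ℝ => ξ * Real.cosh (γ * (T - t)) + Ψ * Real.sinh (γ * (T - t)))
        (ξ * (Real.sinh (γ * (T - t)) * (-γ)) + Ψ * (Real.cosh (γ * (T - t)) * (-γ))) t :=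
      (hc.const_mul ξ).add (hs.const_mul Ψ)
    have hdiv := hnum.div hden (ne_of_gt (hD t ht))
    have hdiv' : HasDerivAt h ((-2 * ξ * (Ψ * (Real.sinh (γ * (T - t)) * -γ) + ξ * (Real.cosh (γ * (T - t)) * -γ)) *
          (ξ * Real.cosh (γ * (T - t)) + Ψ * Real.sinh (γ * (T - t))) -
        -2 * ξ * (Ψ * Real.cosh (γ * (T - t)) + ξ * Real.sinh (γ * (T - t))) *
          (ξ * (Real.sinh (γ * (T - t)) * -γ) + Ψ * (Real.cosh (γ * (T - t)) * -γ))) /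
      (ξ * Real.cosh (γ * (T - t)) + Ψ * Real.sinh (γ * (T - t))) ^ 2) t := by
      rw [hfun]; exact hdiv
    have hξγa : ξ = γ * a := by
      rw [hξ, hγ, show φ * a = (Real.sqrt (φ / a) * a) ^ 2 by
        rw [mul_pow, Real.sq_sqrt (by positivity)]; field_simp]
      exact Real.sqrt_sq (by positivity)
    have haeq : a = ξ / γ := by rw [hξγa]; field_simp
    convert hdiv' using 1
    rw [hh t, ← hγξ, haeq]
    have hDne : ξ * Real.cosh (γ * (T - t)) + Ψ * Real.sinh (γ * (T - t)) ≠ 0 :=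
      ne_of_gt (hD t ht)
    field_simp
    ring
  -- terminal value of h
  have hhT : h T = -2 * Ψ := by
    rw [hh T]
    simp [Real.cosh_zero, Real.sinh_zero]
    field_simp
  -- continuity
  have hkc : ContinuousOn k (Set.Icc 0 T) := fun t ht =>
    (hk t ht).continuousAt.continuousWithinAt
  have hhc : ContinuousOn h (Set.Icc 0 T) := fun t ht =>
    (hderiv t ht).continuousAt.continuousWithinAt
  -- bounds
  obtain ⟨C₁, hC₁⟩ := (isCompact_Icc (a := (0:ℝ)) (b := T)).exists_bound_of_continuousOn hkc
  obtain ⟨C₂, hC₂⟩ := (isCompact_Icc (a := (0:ℝ)) (b := T)).exists_bound_of_continuousOn hhc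
  set R : ℝ := max (max C₁ C₂) 1 with hR
  have hRpos : 0 < R := lt_of_lt_of_le one_pos (le_max_right _ _)
  have hkR : ∀ t ∈ Set.Icc (0:ℝ) T, k t ∈ Metric.closedBall (0:ℝ) R := by
    intro t ht
    simp only [Metric.mem_closedBall, Real.dist_eq, sub_zero]
    exact le_trans (hC₁ t ht) (le_trans (le_max_left _ _) (le_max_left _ _))
  have hhR : ∀ t ∈ Set.Icc (0:ℝ) T, h t ∈ Metric.closedBall (0:ℝ) R := by
    intro t ht
    simp only [Metric.mem_closedBall, Real.dist_eq, sub_zero]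
    exact le_trans (hC₂ t ht) (le_trans (le_max_right _ _) (le_max_left _ _))
  -- Lipschitz
  have hLip : ∀ t : ℝ, LipschitzOnWith (Real.toNNReal (R / a))
      (fun x : ℝ => 2 * φ - x ^ 2 / (2 * a)) (Metric.closedBall (0:ℝ) R) := by
    intro t
    rw [lipschitzOnWith_iff_dist_le_mul]
    intro x hx y hy
    simp only [Metric.mem_closedBall, Real.dist_eq, sub_zero] at hx hy ⊢
    rw [Real.coe_toNNReal _ (by positivity)]
    have : 2 * φ - x ^ 2 / (2 * a) - (2 * φ - y ^ 2 / (2 * a)) = -((x + y) * (x - y)) / (2 * a) := by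
      field_simp; ring
    rw [this, abs_div, abs_neg, abs_mul, abs_of_pos (by positivity : (0:ℝ) < 2 * a)]
    rw [div_le_iff₀ (by positivity)]
    have hxy : |x + y| ≤ 2 * R := by
      calc |x + y| ≤ |x| + |y| := abs_add_le _ _
        _ ≤ 2 * R := by linarith
    calc |x + y| * |x - y| ≤ 2 * R * |x - y| := by
          exact mul_le_mul_of_nonneg_right hxy (abs_nonneg _)
      _ = R / a * |x - y| * (2 * a) := by field_simp
  -- apply uniqueness
  have := ODE_solution_unique_of_mem_Icc_left (v := fun _ x => 2 * φ - x ^ 2 / (2 * a))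
    (s := fun _ => Metric.closedBall (0:ℝ) R) (K := Real.toNNReal (R / a))
    (f := k) (g := h) (a := 0) (b := T)
    (fun t _ => hLip t) hkc
    (fun t ht => (hk t (Set.Ioc_subset_Icc_self ht)).hasDerivWithinAt)
    (fun t ht => hkR t (Set.Ioc_subset_Icc_self ht))
    hhc
    (fun t ht => (hderiv t (Set.Ioc_subset_Icc_self ht)).hasDerivWithinAt)
    (fun t ht => hhR t (Set.Ioc_subset_Icc_self ht))
    (by rw [hkT, hhT])
  exact fun t ht => this ht
end
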